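/- Let v and w be positive integers with w odd. If there exist an MK(2v+1), a resolvable transversal design RTD(3,w), and an STS(w) whose chromatic index is at most (w-1)/2 + v, then there exists a KTS(2vw+w) containing an STS(vw) as a subdesign. -/

import Mathlib

/-- A parallel class on point set `X`: a set of blocks containing each point of `X`
exactly once. -/
def IsParallelClassOn (X : Finset ℕ) (P : Finset (Finset ℕ)) : Prop :=
  (∀ b ∈ P, b ⊆ X) ∧ ∀ x ∈ X, ∃! b, b ∈ P ∧ x ∈ b

/-- A Steiner triple system on point set `V` with block set `B`: blocks are 3-element
subsets of `V` and every pair of distinct points lies in exactly one block. -/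
def IsSTS (V : Finset ℕ) (B : Finset (Finset ℕ)) : Prop :=
  (∀ b ∈ B, b ⊆ V ∧ b.card = 3) ∧
  ∀ x ∈ V, ∀ y ∈ V, x ≠ y → ∃! b, b ∈ B ∧ x ∈ b ∧ y ∈ b

/-- A resolution of the block set `B` into parallel classes on `X`:
every block lies in exactly one class. -/
def IsResolution (X : Finset ℕ) (B : Finset (Finset ℕ))
    (R : Finset (Finset (Finset ℕ))) : Prop :=
  (∀ P ∈ R, P ⊆ B ∧ IsParallelClassOn X P) ∧ ∀ b ∈ B, ∃! P, P ∈ R ∧ b ∈ P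

/-- A Kirkman triple system: a resolvable Steiner triple system. -/
def IsKTS (V : Finset ℕ) (B : Finset (Finset ℕ)) : Prop :=
  IsSTS V B ∧ ∃ R : Finset (Finset (Finset ℕ)), IsResolution V B R

/-- There exists a KTS of order `v` containing an STS of order `u` as a subdesign. -/
def ExistsKTSSubSTS (v u : ℕ) : Prop :=
  ∃ (V U : Finset ℕ) (B A : Finset (Finset ℕ)),
    IsKTS V B ∧ IsSTS U A ∧ U ⊆ V ∧ A ⊆ B ∧ V.card = v ∧ U.card = u

/-- A uniform 3-GDD of type g^u with groups `G i` and block set `B`: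
groups are disjoint of size `g`, blocks are triples meeting each group at most once,
and every pair of points from distinct groups lies in exactly one block. -/
def IsGDD (g u : ℕ) (G : Fin u → Finset ℕ) (B : Finset (Finset ℕ)) : Prop :=
  (∀ i, (G i).card = g) ∧
  (∀ i j, i ≠ j → Disjoint (G i) (G j)) ∧
  (∀ b ∈ B, b ⊆ Finset.univ.biUnion G ∧ b.card = 3 ∧ ∀ i, (b ∩ G i).card ≤ 1) ∧
  ∀ x y : ℕ, (∃ i j, i ≠ j ∧ x ∈ G i ∧ y ∈ G j) → ∃! b, b ∈ B ∧ x ∈ b ∧ y ∈ b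

/-- A Kirkman frame of type h^u: a 3-GDD of type h^u whose blocks resolve into
partial parallel classes, each a parallel class on the complement of some group. -/
def IsKirkmanFrame (h u : ℕ) (G : Fin u → Finset ℕ) (B : Finset (Finset ℕ)) : Prop :=
  IsGDD h u G B ∧
  ∃ R : Finset (Finset (Finset ℕ)),
    (∀ P ∈ R, P ⊆ B ∧ ∃ i, IsParallelClassOn (Finset.univ.biUnion G \ G i) P) ∧
    ∀ b ∈ B, ∃! P, P ∈ R ∧ b ∈ P

/-- There exists a Kirkman frame of type (g;h)^u: a Kirkman frame of type h^u with
groups `G i` containing as a subdesign a 3-GDD of type g^u with groups `W i ⊆ G i`. -/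
def ExistsFrameSubGDD (g h u : ℕ) : Prop :=
  ∃ (G W : Fin u → Finset ℕ) (B A : Finset (Finset ℕ)),
    IsKirkmanFrame h u G B ∧ IsGDD g u W A ∧ (∀ i, W i ⊆ G i) ∧ A ⊆ B

/-- There exists a resolvable transversal design RTD(3,m): a resolvable 3-GDD of
type m^3. -/
def ExistsRTD3 (m : ℕ) : Prop :=
  ∃ (G : Fin 3 → Finset ℕ) (B : Finset (Finset ℕ)),
    IsGDD m 3 G B ∧
    ∃ R : Finset (Finset (Finset ℕ)), IsResolution (Finset.univ.biUnion G) B R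

/-- A pairwise balanced design PBD(v,K) on point set `X` with block set `B`. -/
def IsPBD (v : ℕ) (K : Set ℕ) (X : Finset ℕ) (B : Finset (Finset ℕ)) : Prop :=
  X.card = v ∧ (∀ b ∈ B, b ⊆ X ∧ b.card ∈ K) ∧
  ∀ x ∈ X, ∀ y ∈ X, x ≠ y → ∃! b, b ∈ B ∧ x ∈ b ∧ y ∈ b

/-- The block set `B` has chromatic index at most `k`: it can be partitioned into at
most `k` partial parallel classes (sets of pairwise disjoint blocks). -/
def ChromIndexLE (B : Finset (Finset ℕ)) (k : ℕ) : Prop :=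
  ∃ R : Finset (Finset (Finset ℕ)), R.card ≤ k ∧
    (∀ P ∈ R, P ⊆ B ∧ ∀ b ∈ P, ∀ c ∈ P, b ≠ c → Disjoint b c) ∧
    ∀ b ∈ B, ∃ P ∈ R, b ∈ P

open Finset
namespace K15

/-- choice map between equal-card finsets -/
lemma exists_map {α β : Type} [DecidableEq β] [Inhabited β] (s : Finset α) (t : Finset β)
    (h : s.card = t.card) :
    ∃ f : α → β, (∀ a ∈ s, f a ∈ t) ∧ (∀ a ∈ s, ∀ b ∈ s, f a = f b → a = b) ∧
      (∀ b ∈ t, ∃ a ∈ s, f a = b) := by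
  classical
  let e : {x // x ∈ s} ≃ {x // x ∈ t} := Finset.equivOfCardEq h
  refine ⟨fun a => if ha : a ∈ s then (e ⟨a, ha⟩ : β) else default, ?_, ?_, ?_⟩
  · intro a ha; simp only [dif_pos ha]; exact (e ⟨a, ha⟩).2
  · intro a ha b hb hab
    simp only [dif_pos ha, dif_pos hb] at hab
    have := e.injective (Subtype.ext hab)
    exact congrArg Subtype.val this
  · intro b hb
    refine ⟨(e.symm ⟨b, hb⟩ : α), (e.symm ⟨b, hb⟩).2, ?_⟩
    simp only [dif_pos (e.symm ⟨b, hb⟩).2]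
    have : e ⟨(e.symm ⟨b, hb⟩ : α), (e.symm ⟨b, hb⟩).2⟩ = ⟨b, hb⟩ := by
      rw [Subtype.coe_eta]; exact e.apply_symm_apply _
    rw [this]

/-- every point of an STS lies in (card-1)/2 blocks (as 2*deg = card - 1). -/
lemma sts_degree {V B} (hS : IsSTS V B) {x} (hx : x ∈ V) :
    2 * (B.filter (fun b => x ∈ b)).card = V.card - 1 := by
  classical
  have key : (V.erase x) = (B.filter (fun b => x ∈ b)).biUnion (fun b => b.erase x) := by
    ext y
    simp only [mem_erase, mem_biUnion, mem_filter]
    constructor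
    · rintro ⟨hyx, hy⟩
      obtain ⟨b, ⟨hbB, hxb, hyb⟩, -⟩ := hS.2 x hx y hy (Ne.symm hyx)
      exact ⟨b, ⟨hbB, hxb⟩, hyx, hyb⟩
    · rintro ⟨b, ⟨hbB, hxb⟩, hyx, hyb⟩
      exact ⟨hyx, (hS.1 b hbB).1 hyb⟩
  have hdisj : ∀ b₁ ∈ B.filter (fun b => x ∈ b), ∀ b₂ ∈ B.filter (fun b => x ∈ b),
      b₁ ≠ b₂ → Disjoint (b₁.erase x) (b₂.erase x) := by
    intro b₁ h₁ b₂ h₂ hne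
    simp only [mem_filter] at h₁ h₂
    rw [Finset.disjoint_left]
    intro y hy₁ hy₂
    simp only [mem_erase] at hy₁ hy₂
    have hyV : y ∈ V := (hS.1 b₁ h₁.1).1 hy₁.2
    obtain ⟨b, -, huniq⟩ := hS.2 x hx y hyV (Ne.symm hy₁.1)
    exact hne ((huniq b₁ ⟨h₁.1, h₁.2, hy₁.2⟩).trans (huniq b₂ ⟨h₂.1, h₂.2, hy₂.2⟩).symm)
  have hcard : (V.erase x).card = V.card - 1 := card_erase_of_mem hx
  rw [key, card_biUnion hdisj] at hcard
  have hsum : ∑ u ∈ B.filter (fun b => x ∈ b), (u.erase x).card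
      = 2 * (B.filter (fun b => x ∈ b)).card := by
    rw [Finset.sum_congr rfl (fun b hb => ?_), Finset.sum_const, smul_eq_mul, mul_comm]
    simp only [mem_filter] at hb
    rw [card_erase_of_mem hb.2, (hS.1 b hb.1).2]
  omega

/-- the number of classes of a resolution equals the degree of any point. -/
lemma res_count {V B R} (hR : IsResolution V B R) {x} (hx : x ∈ V) :
    R.card = (B.filter (fun b => x ∈ b)).card := by
  classical
  refine Finset.card_bij (fun P hP => (((hR.1 P hP).2.2) x hx).choose) ?_ ?_ ?_
  · intro P hP
    obtain ⟨h1, -⟩ := (((hR.1 P hP).2.2) x hx).choose_spec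
    exact mem_filter.2 ⟨(hR.1 P hP).1 h1.1, h1.2⟩
  · intro P₁ hP₁ P₂ hP₂ heq
    dsimp only at heq
    obtain ⟨⟨hb₁, -⟩, -⟩ := (((hR.1 P₁ hP₁).2.2) x hx).choose_spec
    obtain ⟨⟨hb₂, -⟩, -⟩ := (((hR.1 P₂ hP₂).2.2) x hx).choose_spec
    rw [heq] at hb₁
    have hbB : (((hR.1 P₂ hP₂).2.2) x hx).choose ∈ B := (hR.1 P₂ hP₂).1 hb₂
    obtain ⟨Q, -, hQu⟩ := hR.2 _ hbB
    exact (hQu P₁ ⟨hP₁, hb₁⟩).trans (hQu P₂ ⟨hP₂, hb₂⟩).symm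
  · intro b hb
    simp only [mem_filter] at hb
    obtain ⟨P, ⟨hPR, hbP⟩, -⟩ := hR.2 b hb.1
    refine ⟨P, hPR, ?_⟩
    obtain ⟨⟨hb', hx'⟩, -⟩ := (((hR.1 P hPR).2.2) x hx).choose_spec
    obtain ⟨c, -, hcu⟩ := ((hR.1 P hPR).2.2) x hx
    exact (hcu _ ⟨hb', hx'⟩).trans (hcu b ⟨hbP, hb.2⟩).symm

variable (w : ℕ)

noncomputable def hlf : ZMod w := ((w + 1) / 2 : ℕ)

lemma two_hlf (hodd : Odd w) : (2 : ZMod w) * hlf w = 1 := by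
  have h : 2 * ((w + 1) / 2) = w + 1 := by obtain ⟨k, hk⟩ := hodd; omega
  have h2 : ((2 * ((w + 1) / 2) : ℕ) : ZMod w) = ((w + 1 : ℕ) : ZMod w) := by rw [h]
  push_cast at h2
  rw [hlf, h2, ZMod.natCast_self]; ring

noncomputable def coordf (i : Fin 3) (a d : ZMod w) : ZMod w :=
  if i = 0 then a else if i = 1 then a - d else a - hlf w * d

noncomputable def cf : Fin 3 → ZMod w := ![0, 1, hlf w]

lemma coordf_eq (i : Fin 3) (a d : ZMod w) : coordf w i a d = a - cf w i * d := by
  fin_cases i <;> simp [coordf, cf] <;> ring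

lemma cf_inv (hodd : Odd w) {i j : Fin 3} (hij : i ≠ j) :
    ∃ u : ZMod w, (cf w j - cf w i) * u = 1 := by
  have hh := two_hlf w hodd
  fin_cases i <;> fin_cases j <;> (try exact absurd rfl hij)
  · exact ⟨1, show ((1 : ZMod w) - 0) * 1 = 1 by ring⟩
  · exact ⟨2, show (hlf w - 0) * 2 = 1 by linear_combination hh⟩
  · exact ⟨-1, show ((0 : ZMod w) - 1) * (-1) = 1 by ring⟩
  · exact ⟨-2, show (hlf w - 1) * (-2) = 1 by linear_combination (-1) * hh⟩
  · exact ⟨-2, show ((0 : ZMod w) - hlf w) * (-2) = 1 by linear_combination hh⟩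
  · exact ⟨2, show ((1 : ZMod w) - hlf w) * 2 = 1 by linear_combination (-1) * hh⟩

lemma coord_solve (hodd : Odd w) {i j : Fin 3} (hij : i ≠ j) (q r : ZMod w) :
    ∃! ad : ZMod w × ZMod w, coordf w i ad.1 ad.2 = q ∧ coordf w j ad.1 ad.2 = r := by
  obtain ⟨u, hu⟩ := cf_inv w hodd hij
  refine ⟨⟨q + cf w i * (u * (q - r)), u * (q - r)⟩, ⟨?_, ?_⟩, ?_⟩
  · rw [coordf_eq]; ring
  · rw [coordf_eq]; dsimp only; linear_combination (r - q) * hu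
  · rintro ⟨a, d⟩ ⟨ha, hd⟩
    rw [coordf_eq] at ha hd
    dsimp only at ha hd ⊢
    have hd2 : d = u * (q - r) := by linear_combination u * ha - u * hd - d * hu
    have ha2 : a = q + cf w i * (u * (q - r)) := by linear_combination ha + cf w i * hd2
    rw [ha2, hd2]

noncomputable def ptb (b : Finset ℕ) (i : Fin 3) : ℕ :=
  if h : b.card = 3 then ((b.orderIsoOfFin h) i : ℕ) else 0

lemma ptb_mem {b : Finset ℕ} (hb : b.card = 3) (i : Fin 3) : ptb b i ∈ b := by
  rw [ptb, dif_pos hb]; exact ((b.orderIsoOfFin hb) i).2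

lemma ptb_inj {b : Finset ℕ} (hb : b.card = 3) {i j : Fin 3} (h : ptb b i = ptb b j) :
    i = j := by
  simp only [ptb, dif_pos hb] at h
  exact (b.orderIsoOfFin hb).injective (Subtype.ext h)

lemma ptb_surj {b : Finset ℕ} (hb : b.card = 3) {x : ℕ} (hx : x ∈ b) :
    ∃ i : Fin 3, ptb b i = x := by
  obtain ⟨i, hi⟩ := (b.orderIsoOfFin hb).surjective ⟨x, hx⟩
  exact ⟨i, by rw [ptb, dif_pos hb, hi]⟩

/-- cross block -/
noncomputable def cB (b : Finset ℕ) (a d : ZMod w) : Finset ℕ :=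
  Finset.image (fun i : Fin 3 => ptb b i * w + (coordf w i a d).val) Finset.univ

/-- within block -/
noncomputable def wB (τ : ℕ → ℕ) (x : ℕ) (c : Finset ℕ) : Finset ℕ :=
  c.image (fun p => x * w + τ p)

lemma enc_inj (hw : 0 < w) {x y q r : ℕ} (hq : q < w) (hr : r < w) :
    x * w + q = y * w + r ↔ x = y ∧ q = r := by
  constructor
  · intro h
    have hm : q = r := by
      have := congrArg (· % w) h
      simpa [mul_comm, Nat.mul_add_mod, Nat.mod_eq_of_lt hq, Nat.mod_eq_of_lt hr] using this
    subst hm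
    exact ⟨Nat.eq_of_mul_eq_mul_right hw (by omega), rfl⟩
  · rintro ⟨rfl, rfl⟩; rfl

variable [NeZero w]

lemma w_pos : 0 < w := Nat.pos_of_ne_zero (NeZero.ne w)

lemma mem_cB {b : Finset ℕ} {x q : ℕ} {a d : ZMod w} (hq : q < w) :
    x * w + q ∈ cB w b a d ↔ ∃ i : Fin 3, ptb b i = x ∧ (coordf w i a d).val = q := by
  rw [cB]
  simp only [mem_image, mem_univ, true_and]
  constructor
  · rintro ⟨i, hi⟩
    obtain ⟨h1, h2⟩ := (enc_inj w (w_pos w) (ZMod.val_lt _) hq).1 hi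
    exact ⟨i, h1, h2⟩
  · rintro ⟨i, h1, h2⟩; exact ⟨i, by rw [h1, h2]⟩

lemma grp_cB {b : Finset ℕ} (hb : b.card = 3) (a d : ZMod w) :
    (cB w b a d).image (fun e => e / w) = b := by
  rw [cB, Finset.image_image]
  ext y
  simp only [mem_image, mem_univ, true_and, Function.comp]
  constructor
  · rintro ⟨i, hi⟩
    have : (ptb b i * w + (coordf w i a d).val) / w = ptb b i := by
      rw [mul_comm, Nat.mul_add_div (w_pos w), Nat.div_eq_of_lt (ZMod.val_lt _)]; ring
    rw [this] at hi; exact hi ▸ ptb_mem hb i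
  · intro hy
    obtain ⟨i, hi⟩ := ptb_surj hb hy
    refine ⟨i, ?_⟩
    rw [mul_comm (ptb b i), Nat.mul_add_div (w_pos w), Nat.div_eq_of_lt (ZMod.val_lt _), hi]
    ring

lemma grp_wB {τ : ℕ → ℕ} {W c : Finset ℕ} {x : ℕ} (hτ1 : ∀ p ∈ W, τ p < w)
    (hc : c ⊆ W) (hc0 : c.Nonempty) : (wB w τ x c).image (fun e => e / w) = {x} := by
  rw [wB, Finset.image_image]
  ext y
  simp only [mem_image, Function.comp, mem_singleton]
  constructor
  · rintro ⟨p, hp, hpy⟩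
    rw [mul_comm, Nat.mul_add_div (w_pos w), Nat.div_eq_of_lt (hτ1 p (hc hp))] at hpy
    omega
  · rintro rfl
    obtain ⟨p, hp⟩ := hc0
    refine ⟨p, hp, ?_⟩
    rw [mul_comm, Nat.mul_add_div (w_pos w), Nat.div_eq_of_lt (hτ1 p (hc hp))]
    omega

lemma cB_ne_wB {b : Finset ℕ} (hb : b.card = 3) {a d : ZMod w} {τ : ℕ → ℕ}
    {W c : Finset ℕ} {x : ℕ} (hτ1 : ∀ p ∈ W, τ p < w) (hc : c ⊆ W) (hc0 : c.Nonempty) :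
    cB w b a d ≠ wB w τ x c := by
  intro h
  have := congrArg (Finset.image (fun e => e / w)) h
  rw [grp_cB w hb, grp_wB w hτ1 hc hc0] at this
  rw [this] at hb
  simp at hb

lemma cB_param_inj {b b' : Finset ℕ} (hb : b.card = 3) (hb' : b'.card = 3)
    {a d a' d' : ZMod w} (h : cB w b a d = cB w b' a' d') :
    b = b' ∧ a = a' ∧ d = d' := by
  have hbb : b = b' := by
    have := congrArg (Finset.image (fun e => e / w)) h
    rwa [grp_cB w hb, grp_cB w hb'] at this
  subst hbb
  have hco : ∀ i : Fin 3, coordf w i a d = coordf w i a' d' := by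
    intro i
    have hmem : ptb b i * w + (coordf w i a d).val ∈ cB w b a' d' := by
      rw [← h, cB]; exact Finset.mem_image_of_mem _ (mem_univ i)
    obtain ⟨j, hj1, hj2⟩ := (mem_cB w (ZMod.val_lt _)).1 hmem
    have := ptb_inj hb hj1
    subst this
    exact (ZMod.val_injective w hj2).symm
  have h0 := hco 0
  have h1 := hco 1
  simp only [coordf] at h0 h1
  norm_num at h0 h1
  subst h0
  exact ⟨rfl, rfl, by linear_combination -h1⟩

noncomputable def bigPts (V0 : Finset ℕ) : Finset ℕ :=
  V0.biUnion (fun x => (Finset.range w).image (fun q => x * w + q))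

noncomputable def bigB (τ : ℕ → ℕ) (C : Finset (Finset ℕ)) (V0 : Finset ℕ)
    (B0 : Finset (Finset ℕ)) : Finset (Finset ℕ) :=
  B0.biUnion (fun b => Finset.image (fun p : ZMod w × ZMod w => cB w b p.1 p.2) Finset.univ)
    ∪ V0.biUnion (fun x => C.image (wB w τ x))

lemma mem_bigPts {V0 : Finset ℕ} {e : ℕ} :
    e ∈ bigPts w V0 ↔ ∃ x, x ∈ V0 ∧ ∃ q, q < w ∧ e = x * w + q := by
  simp only [bigPts, mem_biUnion, mem_image, mem_range]
  constructor
  · rintro ⟨x, hx, q, hq, rfl⟩; exact ⟨x, hx, q, hq, rfl⟩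
  · rintro ⟨x, hx, q, hq, rfl⟩; exact ⟨x, hx, q, hq, rfl⟩

lemma mem_bigB {τ : ℕ → ℕ} {C : Finset (Finset ℕ)} {V0 : Finset ℕ}
    {B0 : Finset (Finset ℕ)} {T : Finset ℕ} :
    T ∈ bigB w τ C V0 B0 ↔ (∃ b ∈ B0, ∃ a d : ZMod w, T = cB w b a d) ∨
      (∃ x ∈ V0, ∃ c ∈ C, T = wB w τ x c) := by
  rw [bigB]
  constructor
  · intro h
    rcases mem_union.1 h with h | h
    · obtain ⟨b, hb, hT⟩ := mem_biUnion.1 h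
      obtain ⟨⟨a, d⟩, -, hT⟩ := mem_image.1 hT
      exact Or.inl ⟨b, hb, a, d, hT.symm⟩
    · obtain ⟨x, hx, hT⟩ := mem_biUnion.1 h
      obtain ⟨c, hc, hT⟩ := mem_image.1 hT
      exact Or.inr ⟨x, hx, c, hc, hT.symm⟩
  · rintro (⟨b, hb, a, d, rfl⟩ | ⟨x, hx, c, hc, rfl⟩)
    · exact mem_union_left _ (mem_biUnion.2 ⟨b, hb, mem_image.2 ⟨⟨a, d⟩, mem_univ _, rfl⟩⟩)
    · exact mem_union_right _ (mem_biUnion.2 ⟨x, hx, mem_image.2 ⟨c, hc, rfl⟩⟩)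

lemma mem_wB {τ : ℕ → ℕ} {W c : Finset ℕ} {x x' q : ℕ} (hτ1 : ∀ p ∈ W, τ p < w)
    (hc : c ⊆ W) (hq : q < w) :
    x' * w + q ∈ wB w τ x c ↔ x' = x ∧ ∃ p ∈ c, τ p = q := by
  rw [wB]
  constructor
  · intro h
    obtain ⟨p, hp, heq⟩ := mem_image.1 h
    obtain ⟨h1, h2⟩ := (enc_inj w (w_pos w) (hτ1 p (hc hp)) hq).1 heq
    exact ⟨h1.symm, p, hp, h2⟩
  · rintro ⟨rfl, p, hp, hτp⟩
    exact mem_image.2 ⟨p, hp, by rw [hτp]⟩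

lemma cB_card {b : Finset ℕ} (hb : b.card = 3) (a d : ZMod w) : (cB w b a d).card = 3 := by
  rw [cB, Finset.card_image_of_injOn, card_univ, Fintype.card_fin]
  intro i _ j _ hij
  obtain ⟨h1, -⟩ := (enc_inj w (w_pos w) (ZMod.val_lt _) (ZMod.val_lt _)).1 hij
  exact ptb_inj hb h1

lemma wB_card {τ : ℕ → ℕ} {W c : Finset ℕ} {x : ℕ} (hτ1 : ∀ p ∈ W, τ p < w)
    (hτi : ∀ p ∈ W, ∀ q ∈ W, τ p = τ q → p = q) (hc : c ⊆ W) :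
    (wB w τ x c).card = c.card := by
  rw [wB, Finset.card_image_of_injOn]
  intro p hp q hq hpq
  obtain ⟨-, h2⟩ := (enc_inj w (w_pos w) (hτ1 p (hc hp)) (hτ1 q (hc hq))).1 hpq
  exact hτi p (hc hp) q (hc hq) h2

lemma big_sts (hodd : Odd w) {τ : ℕ → ℕ} {W : Finset ℕ} {C : Finset (Finset ℕ)}
    (hWC : IsSTS W C)
    (hτ1 : ∀ p ∈ W, τ p < w) (hτi : ∀ p ∈ W, ∀ q ∈ W, τ p = τ q → p = q)
    (hτs : ∀ q, q < w → ∃ p ∈ W, τ p = q)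
    {V0 : Finset ℕ} {B0 : Finset (Finset ℕ)} (hS : IsSTS V0 B0) :
    IsSTS (bigPts w V0) (bigB w τ C V0 B0) := by
  constructor
  · intro T hT
    rcases (mem_bigB w).1 hT with ⟨b, hb, a, d, rfl⟩ | ⟨x, hx, c, hc, rfl⟩
    · have hb3 := (hS.1 b hb).2
      refine ⟨?_, cB_card w hb3 a d⟩
      intro e he
      rw [cB] at he
      obtain ⟨i, -, rfl⟩ := mem_image.1 he
      exact (mem_bigPts w).2 ⟨ptb b i, (hS.1 b hb).1 (ptb_mem hb3 i), _, ZMod.val_lt _, rfl⟩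
    · have hcW := (hWC.1 c hc).1
      refine ⟨?_, by rw [wB_card w hτ1 hτi hcW, (hWC.1 c hc).2]⟩
      intro e he
      rw [wB] at he
      obtain ⟨p, hp, rfl⟩ := mem_image.1 he
      exact (mem_bigPts w).2 ⟨x, hx, τ p, hτ1 p (hcW hp), rfl⟩
  · intro e1 he1 e2 he2 hne
    obtain ⟨x1, hx1, q1, hq1, rfl⟩ := (mem_bigPts w).1 he1
    obtain ⟨x2, hx2, q2, hq2, rfl⟩ := (mem_bigPts w).1 he2
    by_cases hxx : x1 = x2
    · subst hxx
      have hqq : q1 ≠ q2 := fun h => hne (by rw [h])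
      obtain ⟨p1, hp1, hτp1⟩ := hτs q1 hq1
      obtain ⟨p2, hp2, hτp2⟩ := hτs q2 hq2
      have hpp : p1 ≠ p2 := fun h => hqq (by rw [← hτp1, ← hτp2, h])
      obtain ⟨c, ⟨hcC, hp1c, hp2c⟩, hcu⟩ := hWC.2 p1 hp1 p2 hp2 hpp
      have hcW := (hWC.1 c hcC).1
      refine ⟨wB w τ x1 c, ⟨(mem_bigB w).2 (Or.inr ⟨x1, hx1, c, hcC, rfl⟩),
        (mem_wB w hτ1 hcW hq1).2 ⟨rfl, p1, hp1c, hτp1⟩,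
        (mem_wB w hτ1 hcW hq2).2 ⟨rfl, p2, hp2c, hτp2⟩⟩, ?_⟩
      rintro T ⟨hT, hm1, hm2⟩
      rcases (mem_bigB w).1 hT with ⟨b, hb, a, d, rfl⟩ | ⟨x', hx', c', hc', rfl⟩
      · exfalso
        have hb3 := (hS.1 b hb).2
        obtain ⟨i1, hi1, hv1⟩ := (mem_cB w hq1).1 hm1
        obtain ⟨i2, hi2, hv2⟩ := (mem_cB w hq2).1 hm2
        have : i1 = i2 := ptb_inj hb3 (by rw [hi1, hi2])
        subst this
        exact hqq (hv1 ▸ hv2 ▸ rfl)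
      · have hc'W := (hWC.1 c' hc').1
        obtain ⟨hx'e, p1', hp1', hτ1'⟩ := (mem_wB w hτ1 hc'W hq1).1 hm1
        obtain ⟨-, p2', hp2', hτ2'⟩ := (mem_wB w hτ1 hc'W hq2).1 hm2
        subst hx'e
        have e1 : p1' = p1 := hτi p1' (hc'W hp1') p1 hp1 (by rw [hτ1', hτp1])
        have e2 : p2' = p2 := hτi p2' (hc'W hp2') p2 hp2 (by rw [hτ2', hτp2])
        subst e1; subst e2
        rw [hcu c' ⟨hc', hp1', hp2'⟩]
    · obtain ⟨b, ⟨hbB, hx1b, hx2b⟩, hbu⟩ := hS.2 x1 hx1 x2 hx2 hxx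
      have hb3 := (hS.1 b hbB).2
      obtain ⟨i1, hi1⟩ := ptb_surj hb3 hx1b
      obtain ⟨i2, hi2⟩ := ptb_surj hb3 hx2b
      have hij : i1 ≠ i2 := fun h => hxx (by rw [← hi1, ← hi2, h])
      obtain ⟨⟨a, d⟩, ⟨hco1, hco2⟩, hadu⟩ := coord_solve w hodd hij (q1 : ZMod w) (q2 : ZMod w)
      refine ⟨cB w b a d, ⟨(mem_bigB w).2 (Or.inl ⟨b, hbB, a, d, rfl⟩),
        (mem_cB w hq1).2 ⟨i1, hi1, by rw [hco1, ZMod.val_cast_of_lt hq1]⟩,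
        (mem_cB w hq2).2 ⟨i2, hi2, by rw [hco2, ZMod.val_cast_of_lt hq2]⟩⟩, ?_⟩
      rintro T ⟨hT, hm1, hm2⟩
      rcases (mem_bigB w).1 hT with ⟨b', hb', a', d', rfl⟩ | ⟨x', hx', c', hc', rfl⟩
      · have hb3' := (hS.1 b' hb').2
        obtain ⟨j1, hj1, hv1⟩ := (mem_cB w hq1).1 hm1
        obtain ⟨j2, hj2, hv2⟩ := (mem_cB w hq2).1 hm2
        have hbb : b' = b := hbu b' ⟨hb', hj1 ▸ ptb_mem hb3' j1, hj2 ▸ ptb_mem hb3' j2⟩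
        subst hbb
        have hji1 : j1 = i1 := ptb_inj hb3 (by rw [hj1, hi1])
        have hji2 : j2 = i2 := ptb_inj hb3 (by rw [hj2, hi2])
        subst hji1; subst hji2
        have hcv1 : coordf w j1 a' d' = (q1 : ZMod w) :=
          ZMod.val_injective w (by rw [hv1, ZMod.val_cast_of_lt hq1])
        have hcv2 : coordf w j2 a' d' = (q2 : ZMod w) :=
          ZMod.val_injective w (by rw [hv2, ZMod.val_cast_of_lt hq2])
        have := hadu ⟨a', d'⟩ ⟨hcv1, hcv2⟩
        rw [Prod.mk.injEq] at this
        rw [this.1, this.2]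
      · exfalso
        have hc'W := (hWC.1 c' hc').1
        obtain ⟨h1, -⟩ := (mem_wB w hτ1 hc'W hq1).1 hm1
        obtain ⟨h2, -⟩ := (mem_wB w hτ1 hc'W hq2).1 hm2
        exact hxx (h1 ▸ h2 ▸ rfl)

lemma cast_val (a : ZMod w) : ((a.val : ℕ) : ZMod w) = a := by
  apply ZMod.val_injective
  rw [ZMod.val_cast_of_lt (ZMod.val_lt a)]

lemma coordf_zero (i : Fin 3) (a : ZMod w) : coordf w i a 0 = a := by
  rw [coordf_eq]; ring

lemma mem_cB0 {b : Finset ℕ} (hb : b.card = 3) {x q : ℕ} {a : ZMod w} (hq : q < w) :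
    x * w + q ∈ cB w b a 0 ↔ x ∈ b ∧ a.val = q := by
  rw [mem_cB w hq]
  constructor
  · rintro ⟨i, h1, h2⟩
    rw [coordf_zero] at h2
    exact ⟨h1 ▸ ptb_mem hb i, h2⟩
  · rintro ⟨hx, hv⟩
    obtain ⟨i, hi⟩ := ptb_surj hb hx
    exact ⟨i, hi, by rw [coordf_zero]; exact hv⟩

lemma wB_inj {τ : ℕ → ℕ} {W : Finset ℕ} (hτ1 : ∀ p ∈ W, τ p < w)
    (hτi : ∀ p ∈ W, ∀ q ∈ W, τ p = τ q → p = q) {x x' : ℕ} {c c' : Finset ℕ}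
    (hc : c ⊆ W) (hc' : c' ⊆ W) (hc0 : c.Nonempty)
    (h : wB w τ x c = wB w τ x' c') : x = x' ∧ c = c' := by
  have hc0' : c'.Nonempty := by
    by_contra hcon
    rw [not_nonempty_iff_eq_empty] at hcon
    subst hcon
    obtain ⟨p, hp⟩ := hc0
    have : x * w + τ p ∈ wB w τ x' (∅ : Finset ℕ) := h ▸ mem_image_of_mem _ hp
    simp [wB] at this
  have hxx : x = x' := by
    have := congrArg (Finset.image (fun e => e / w)) h
    rw [grp_wB w hτ1 hc hc0, grp_wB w hτ1 hc' hc0'] at this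
    exact Finset.singleton_injective this
  subst hxx
  refine ⟨rfl, ?_⟩
  ext p
  constructor
  · intro hp
    have : x * w + τ p ∈ wB w τ x c' := h ▸ mem_image_of_mem _ hp
    obtain ⟨-, p', hp', hττ⟩ := (mem_wB w hτ1 hc' (hτ1 p (hc hp))).1 this
    exact (hτi p' (hc' hp') p (hc hp) hττ) ▸ hp'
  · intro hp
    have : x * w + τ p ∈ wB w τ x c := h.symm ▸ mem_image_of_mem _ hp
    obtain ⟨-, p', hp', hττ⟩ := (mem_wB w hτ1 hc (hτ1 p (hc' hp))).1 this
    exact (hτi p' (hc hp') p (hc' hp) hττ) ▸ hp'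

/-- hybrid class -/
noncomputable def Hcl (τ : ℕ → ℕ) (C : Finset (Finset ℕ)) (col : Finset ℕ → ℕ)
    (V : Finset ℕ) (B : Finset (Finset ℕ)) (cls : Finset ℕ → Finset (Finset ℕ))
    (σ : ℕ → Finset (Finset ℕ) → ℕ) (i : ℕ) : Finset (Finset ℕ) :=
  (V.biUnion fun x => (C.filter (fun c => col c = i)).image (wB w τ x)) ∪
  (B.biUnion fun b => ((range w).filter (fun p => σ p (cls b) = i)).image
      (fun p : ℕ => cB w b ((p : ℕ) : ZMod w) 0))

/-- pure class -/
noncomputable def Pcl (P : Finset (Finset ℕ)) (d : ZMod w) : Finset (Finset ℕ) :=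
  P.biUnion fun b => Finset.image (fun a : ZMod w => cB w b a d) Finset.univ

noncomputable def bigR (τ : ℕ → ℕ) (C : Finset (Finset ℕ)) (col : Finset ℕ → ℕ)
    (V : Finset ℕ) (B : Finset (Finset ℕ)) (cls : Finset ℕ → Finset (Finset ℕ))
    (σ : ℕ → Finset (Finset ℕ) → ℕ) (k : ℕ) (Rk : Finset (Finset (Finset ℕ))) :
    Finset (Finset (Finset ℕ)) :=
  ((range k).image (Hcl w τ C col V B cls σ)) ∪
  ((Rk ×ˢ ((range w).erase 0)).image (fun pd => Pcl w pd.1 ((pd.2 : ℕ) : ZMod w)))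

lemma mem_Hcl {τ : ℕ → ℕ} {C : Finset (Finset ℕ)} {col : Finset ℕ → ℕ}
    {V : Finset ℕ} {B : Finset (Finset ℕ)} {cls : Finset ℕ → Finset (Finset ℕ)}
    {σ : ℕ → Finset (Finset ℕ) → ℕ} {i : ℕ} {T : Finset ℕ} :
    T ∈ Hcl w τ C col V B cls σ i ↔
      (∃ x ∈ V, ∃ c ∈ C, col c = i ∧ T = wB w τ x c) ∨
      (∃ b ∈ B, ∃ p, p < w ∧ σ p (cls b) = i ∧ T = cB w b (p : ZMod w) 0) := by
  rw [Hcl]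
  constructor
  · intro h
    rcases mem_union.1 h with h | h
    · obtain ⟨x, hx, hT⟩ := mem_biUnion.1 h
      obtain ⟨c, hc, hT⟩ := mem_image.1 hT
      rw [mem_filter] at hc
      exact Or.inl ⟨x, hx, c, hc.1, hc.2, hT.symm⟩
    · obtain ⟨b, hb, hT⟩ := mem_biUnion.1 h
      obtain ⟨p, hp, hT⟩ := mem_image.1 hT
      rw [mem_filter, mem_range] at hp
      exact Or.inr ⟨b, hb, p, hp.1, hp.2, hT.symm⟩
  · rintro (⟨x, hx, c, hc, hcol, rfl⟩ | ⟨b, hb, p, hp, hσ, rfl⟩)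
    · exact mem_union_left _ (mem_biUnion.2 ⟨x, hx,
        mem_image.2 ⟨c, mem_filter.2 ⟨hc, hcol⟩, rfl⟩⟩)
    · exact mem_union_right _ (mem_biUnion.2 ⟨b, hb,
        mem_image.2 ⟨p, mem_filter.2 ⟨mem_range.2 hp, hσ⟩, rfl⟩⟩)

lemma mem_Pcl {P : Finset (Finset ℕ)} {d : ZMod w} {T : Finset ℕ} :
    T ∈ Pcl w P d ↔ ∃ b ∈ P, ∃ a : ZMod w, T = cB w b a d := by
  rw [Pcl]
  constructor
  · intro h
    obtain ⟨b, hb, hT⟩ := mem_biUnion.1 h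
    obtain ⟨a, -, hT⟩ := mem_image.1 hT
    exact ⟨b, hb, a, hT.symm⟩
  · rintro ⟨b, hb, a, rfl⟩
    exact mem_biUnion.2 ⟨b, hb, mem_image.2 ⟨a, mem_univ _, rfl⟩⟩

lemma mem_bigR {τ : ℕ → ℕ} {C : Finset (Finset ℕ)} {col : Finset ℕ → ℕ}
    {V : Finset ℕ} {B : Finset (Finset ℕ)} {cls : Finset ℕ → Finset (Finset ℕ)}
    {σ : ℕ → Finset (Finset ℕ) → ℕ} {k : ℕ} {Rk : Finset (Finset (Finset ℕ))}
    {Pc : Finset (Finset ℕ)} :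
    Pc ∈ bigR w τ C col V B cls σ k Rk ↔
      (∃ i < k, Pc = Hcl w τ C col V B cls σ i) ∨
      (∃ P ∈ Rk, ∃ d, d < w ∧ d ≠ 0 ∧ Pc = Pcl w P ((d : ℕ) : ZMod w)) := by
  rw [bigR]
  constructor
  · intro h
    rcases mem_union.1 h with h | h
    · obtain ⟨i, hi, hT⟩ := mem_image.1 h
      exact Or.inl ⟨i, mem_range.1 hi, hT.symm⟩
    · obtain ⟨⟨P, d⟩, hPd, hT⟩ := mem_image.1 h
      rw [mem_product, mem_erase, mem_range] at hPd
      exact Or.inr ⟨P, hPd.1, d, hPd.2.2, hPd.2.1, hT.symm⟩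
  · rintro (⟨i, hi, rfl⟩ | ⟨P, hP, d, hd1, hd2, rfl⟩)
    · exact mem_union_left _ (mem_image.2 ⟨i, mem_range.2 hi, rfl⟩)
    · exact mem_union_right _ (mem_image.2 ⟨⟨P, d⟩,
        mem_product.2 ⟨hP, mem_erase.2 ⟨hd2, mem_range.2 hd1⟩⟩, rfl⟩)

lemma cB_sub {V0 : Finset ℕ} {B0 : Finset (Finset ℕ)} (hS : IsSTS V0 B0) {b : Finset ℕ}
    (hb : b ∈ B0) (a d : ZMod w) : cB w b a d ⊆ bigPts w V0 := by
  intro e he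
  rw [cB] at he
  obtain ⟨i, -, rfl⟩ := mem_image.1 he
  exact (mem_bigPts w).2 ⟨ptb b i, (hS.1 b hb).1 (ptb_mem (hS.1 b hb).2 i), _,
    ZMod.val_lt _, rfl⟩

lemma wB_sub {τ : ℕ → ℕ} {W : Finset ℕ} {C : Finset (Finset ℕ)} (hWC : IsSTS W C)
    (hτ1 : ∀ p ∈ W, τ p < w) {V0 : Finset ℕ} {x : ℕ} (hx : x ∈ V0) {c : Finset ℕ}
    (hc : c ∈ C) : wB w τ x c ⊆ bigPts w V0 := by
  intro e he
  rw [wB] at he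
  obtain ⟨p, hp, rfl⟩ := mem_image.1 he
  exact (mem_bigPts w).2 ⟨x, hx, τ p, hτ1 p ((hWC.1 c hc).1 hp), rfl⟩

lemma big_res (hodd : Odd w) {τ : ℕ → ℕ} {W : Finset ℕ} {C : Finset (Finset ℕ)}
    (hWC : IsSTS W C)
    (hτ1 : ∀ p ∈ W, τ p < w) (hτi : ∀ p ∈ W, ∀ q ∈ W, τ p = τ q → p = q)
    {col : Finset ℕ → ℕ} {k : ℕ}
    (hcol1 : ∀ c ∈ C, col c < k)
    (hcol2 : ∀ c1 ∈ C, ∀ c2 ∈ C, col c1 = col c2 → c1 = c2 ∨ Disjoint c1 c2)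
    {V : Finset ℕ} {B : Finset (Finset ℕ)} (hS : IsSTS V B)
    {Rk : Finset (Finset (Finset ℕ))} (hRk : IsResolution V B Rk)
    {cls : Finset ℕ → Finset (Finset ℕ)}
    (hcls1 : ∀ b ∈ B, cls b ∈ Rk ∧ b ∈ cls b)
    (hcls2 : ∀ b ∈ B, ∀ P ∈ Rk, b ∈ P → P = cls b)
    {σ : ℕ → Finset (Finset ℕ) → ℕ}
    (hσ1 : ∀ q, q < w → ∀ P ∈ Rk, σ q P < k ∧
        ¬ ∃ c ∈ C, col c = σ q P ∧ ∃ p ∈ c, τ p = q)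
    (hσ2 : ∀ q, q < w → ∀ P1 ∈ Rk, ∀ P2 ∈ Rk, σ q P1 = σ q P2 → P1 = P2)
    (hσ3 : ∀ q, q < w → ∀ i, i < k → (¬ ∃ c ∈ C, col c = i ∧ ∃ p ∈ c, τ p = q) →
        ∃ P ∈ Rk, σ q P = i) :
    IsResolution (bigPts w V) (bigB w τ C V B) (bigR w τ C col V B cls σ k Rk) := by
  have hBc3 : ∀ b ∈ B, b.card = 3 := fun b hb => (hS.1 b hb).2
  constructor
  · intro Pc hPc
    rcases (mem_bigR w).1 hPc with ⟨i, hik, rfl⟩ | ⟨P, hP, d, hdw, hd0, rfl⟩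
    · constructor
      · intro T hT
        rcases (mem_Hcl w).1 hT with ⟨x, hx, c, hc, -, rfl⟩ | ⟨b, hb, p, -, -, rfl⟩
        · exact (mem_bigB w).2 (Or.inr ⟨x, hx, c, hc, rfl⟩)
        · exact (mem_bigB w).2 (Or.inl ⟨b, hb, _, _, rfl⟩)
      constructor
      · intro T hT
        rcases (mem_Hcl w).1 hT with ⟨x, hx, c, hc, -, rfl⟩ | ⟨b, hb, p, -, -, rfl⟩
        · exact wB_sub w hWC hτ1 hx hc
        · exact cB_sub w hS hb _ _
      · intro e he
        obtain ⟨x, hx, q, hq, rfl⟩ := (mem_bigPts w).1 he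
        by_cases hcov : ∃ c ∈ C, col c = i ∧ ∃ p ∈ c, τ p = q
        · obtain ⟨c, hcC, hcoli, p, hpc, hτp⟩ := hcov
          have hcW := (hWC.1 c hcC).1
          refine ⟨wB w τ x c, ⟨(mem_Hcl w).2 (Or.inl ⟨x, hx, c, hcC, hcoli, rfl⟩),
            (mem_wB w hτ1 hcW hq).2 ⟨rfl, p, hpc, hτp⟩⟩, ?_⟩
          rintro T ⟨hT, hmem⟩
          rcases (mem_Hcl w).1 hT with ⟨x', hx', c', hc', hcol', rfl⟩ |
            ⟨b, hb, p', hp', hσ', rfl⟩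
          · have hc'W := (hWC.1 c' hc').1
            obtain ⟨hxx, p'', hp'', hτ''⟩ := (mem_wB w hτ1 hc'W hq).1 hmem
            subst hxx
            have hpp : p'' = p := hτi p'' (hc'W hp'') p (hcW hpc) (by rw [hτ'', hτp])
            subst hpp
            rcases hcol2 c' hc' c hcC (by rw [hcol', hcoli]) with h | h
            · rw [h]
            · exact absurd (h.forall_ne_finset hp'' hpc) (by simp)
          · exfalso
            obtain ⟨hxb, hval⟩ := (mem_cB0 w (hBc3 b hb) hq).1 hmem
            rw [ZMod.val_cast_of_lt hp'] at hval
            rw [hval] at hσ'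
            have := (hσ1 q hq (cls b) (hcls1 b hb).1).2
            rw [hσ'] at this
            exact this ⟨c, hcC, hcoli, p, hpc, hτp⟩
        · obtain ⟨P, hP, hσP⟩ := hσ3 q hq i hik hcov
          obtain ⟨b, ⟨hbP, hxb⟩, hbu⟩ := ((hRk.1 P hP).2.2) x hx
          have hbB : b ∈ B := (hRk.1 P hP).1 hbP
          have hclsb : cls b = P := (hcls2 b hbB P hP hbP).symm
          refine ⟨cB w b ((q : ℕ) : ZMod w) 0, ⟨(mem_Hcl w).2 (Or.inr ⟨b, hbB, q, hq,
            by rw [hclsb]; exact hσP, rfl⟩),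
            (mem_cB0 w (hBc3 b hbB) hq).2 ⟨hxb, ZMod.val_cast_of_lt hq⟩⟩, ?_⟩
          rintro T ⟨hT, hmem⟩
          rcases (mem_Hcl w).1 hT with ⟨x', hx', c', hc', hcol', rfl⟩ |
            ⟨b', hb', p', hp', hσ', rfl⟩
          · exfalso
            have hc'W := (hWC.1 c' hc').1
            obtain ⟨hxx, p'', hp'', hτ''⟩ := (mem_wB w hτ1 hc'W hq).1 hmem
            exact hcov ⟨c', hc', hcol', p'', hp'', hτ''⟩
          · obtain ⟨hxb', hval⟩ := (mem_cB0 w (hBc3 b' hb') hq).1 hmem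
            rw [ZMod.val_cast_of_lt hp'] at hval
            rw [hval] at hσ'
            have hclsb' : cls b' = P := hσ2 q hq (cls b') (hcls1 b' hb').1 P hP
              (by rw [hσ', hσP])
            have hb'P : b' ∈ P := hclsb' ▸ (hcls1 b' hb').2
            rw [hval, hbu b' ⟨hb'P, hxb'⟩]
    · constructor
      · intro T hT
        obtain ⟨b, hb, a, rfl⟩ := (mem_Pcl w).1 hT
        exact (mem_bigB w).2 (Or.inl ⟨b, (hRk.1 P hP).1 hb, a, _, rfl⟩)
      constructor
      · intro T hT
        obtain ⟨b, hb, a, rfl⟩ := (mem_Pcl w).1 hT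
        exact cB_sub w hS ((hRk.1 P hP).1 hb) _ _
      · intro e he
        obtain ⟨x, hx, q, hq, rfl⟩ := (mem_bigPts w).1 he
        obtain ⟨b, ⟨hbP, hxb⟩, hbu⟩ := ((hRk.1 P hP).2.2) x hx
        have hbB : b ∈ B := (hRk.1 P hP).1 hbP
        have hb3 := hBc3 b hbB
        obtain ⟨i0, hi0⟩ := ptb_surj hb3 hxb
        have hcoval : coordf w i0 (((q : ℕ) : ZMod w) + cf w i0 * ((d : ℕ) : ZMod w))
            ((d : ℕ) : ZMod w) = ((q : ℕ) : ZMod w) := by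
          rw [coordf_eq]; ring
        refine ⟨cB w b (((q : ℕ) : ZMod w) + cf w i0 * ((d : ℕ) : ZMod w)) ((d : ℕ) : ZMod w),
          ⟨(mem_Pcl w).2 ⟨b, hbP, _, rfl⟩,
           (mem_cB w hq).2 ⟨i0, hi0, by rw [hcoval, ZMod.val_cast_of_lt hq]⟩⟩, ?_⟩
        rintro T ⟨hT, hmem⟩
        obtain ⟨b', hb', a', rfl⟩ := (mem_Pcl w).1 hT
        have hb'B : b' ∈ B := (hRk.1 P hP).1 hb'
        have hb'3 := hBc3 b' hb'B
        obtain ⟨j, hj, hvj⟩ := (mem_cB w hq).1 hmem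
        have hxb' : x ∈ b' := hj ▸ ptb_mem hb'3 j
        have hbb : b' = b := hbu b' ⟨hb', hxb'⟩
        subst hbb
        have hji : j = i0 := ptb_inj hb3 (by rw [hj, hi0])
        subst hji
        have hcv : coordf w j a' ((d : ℕ) : ZMod w) = ((q : ℕ) : ZMod w) :=
          ZMod.val_injective w (by rw [hvj, ZMod.val_cast_of_lt hq])
        rw [coordf_eq] at hcv
        have : a' = ((q : ℕ) : ZMod w) + cf w j * ((d : ℕ) : ZMod w) := by
          linear_combination hcv
        rw [this]
  · intro T hT
    have hbigR := @mem_bigR w _ τ C col V B cls σ k Rk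
    rcases (mem_bigB w).1 hT with ⟨b, hb, a, d, rfl⟩ | ⟨x, hx, c, hc, rfl⟩
    · have hb3 := hBc3 b hb
      by_cases hd0 : d = 0
      · subst hd0
        have hup := hσ1 a.val (ZMod.val_lt a) (cls b) (hcls1 b hb).1
        refine ⟨Hcl w τ C col V B cls σ (σ a.val (cls b)), ⟨hbigR.2 (Or.inl ⟨_, hup.1, rfl⟩),
          (mem_Hcl w).2 (Or.inr ⟨b, hb, a.val, ZMod.val_lt a, rfl, by rw [cast_val]⟩)⟩, ?_⟩
        rintro Pc ⟨hPc, hmem⟩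
        rcases hbigR.1 hPc with ⟨i, hik, rfl⟩ | ⟨P, hP, d', hd'w, hd'0, rfl⟩
        · rcases (mem_Hcl w).1 hmem with ⟨x', hx', c', hc', hcol', heq⟩ |
            ⟨b', hb', p', hp', hσ', heq⟩
          · exact absurd heq (cB_ne_wB w hb3 hτ1 (hWC.1 c' hc').1
              (card_pos.1 (by rw [(hWC.1 c' hc').2]; norm_num)))
          · obtain ⟨hbb, haa, -⟩ := cB_param_inj w hb3 (hBc3 b' hb') heq
            subst hbb
            have : p' = a.val := by
              rw [haa, ZMod.val_cast_of_lt hp']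
            rw [← hσ', this]
        · exfalso
          obtain ⟨b'', hb'', a'', heq⟩ := (mem_Pcl w).1 hmem
          obtain ⟨-, -, hdd⟩ := cB_param_inj w hb3 (hBc3 b'' ((hRk.1 P hP).1 hb'')) heq
          have : ((d' : ℕ) : ZMod w).val = 0 := by rw [← hdd]; simp
          rw [ZMod.val_cast_of_lt hd'w] at this
          exact hd'0 this
      · have hdval : ((d.val : ℕ) : ZMod w) = d := cast_val w d
        refine ⟨Pcl w (cls b) d, ⟨?_, (mem_Pcl w).2 ⟨b, (hcls1 b hb).2, a, rfl⟩⟩, ?_⟩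
        · refine hbigR.2 (Or.inr ⟨cls b, (hcls1 b hb).1, d.val, ZMod.val_lt d, ?_, ?_⟩)
          · intro h
            exact hd0 (by rw [← hdval, h]; simp)
          · rw [hdval]
        · rintro Pc ⟨hPc, hmem⟩
          rcases hbigR.1 hPc with ⟨i, hik, rfl⟩ | ⟨P, hP, d', hd'w, hd'0, rfl⟩
          · exfalso
            rcases (mem_Hcl w).1 hmem with ⟨x', hx', c', hc', hcol', heq⟩ |
              ⟨b', hb', p', hp', hσ', heq⟩
            · exact absurd heq (cB_ne_wB w hb3 hτ1 (hWC.1 c' hc').1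
                (card_pos.1 (by rw [(hWC.1 c' hc').2]; norm_num)))
            · obtain ⟨-, -, hdd⟩ := cB_param_inj w hb3 (hBc3 b' hb') heq
              exact hd0 hdd
          · obtain ⟨b'', hb'', a'', heq⟩ := (mem_Pcl w).1 hmem
            obtain ⟨hbb, -, hdd⟩ := cB_param_inj w hb3 (hBc3 b'' ((hRk.1 P hP).1 hb'')) heq
            subst hbb
            have hPcls : P = cls b := hcls2 b hb P hP hb''
            rw [hPcls, ← hdd]
    · have hcW := (hWC.1 c hc).1
      have hc0 : c.Nonempty := card_pos.1 (by rw [(hWC.1 c hc).2]; norm_num)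
      refine ⟨Hcl w τ C col V B cls σ (col c), ⟨hbigR.2 (Or.inl ⟨_, hcol1 c hc, rfl⟩),
        (mem_Hcl w).2 (Or.inl ⟨x, hx, c, hc, rfl, rfl⟩)⟩, ?_⟩
      rintro Pc ⟨hPc, hmem⟩
      rcases hbigR.1 hPc with ⟨i, hik, rfl⟩ | ⟨P, hP, d', hd'w, hd'0, rfl⟩
      · rcases (mem_Hcl w).1 hmem with ⟨x', hx', c', hc', hcol', heq⟩ |
          ⟨b', hb', p', hp', hσ', heq⟩
        · obtain ⟨-, hcc⟩ := wB_inj w hτ1 hτi hcW (hWC.1 c' hc').1 hc0 heq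
          rw [← hcol', ← hcc]
        · exact absurd heq.symm (cB_ne_wB w (hBc3 b' hb') hτ1 hcW hc0)
      · exfalso
        obtain ⟨b'', hb'', a'', heq⟩ := (mem_Pcl w).1 hmem
        exact absurd heq.symm (cB_ne_wB w (hBc3 b'' ((hRk.1 P hP).1 hb'')) hτ1 hcW hc0)

lemma bigPts_card {V0 : Finset ℕ} : (bigPts w V0).card = V0.card * w := by
  rw [bigPts, card_biUnion]
  · rw [Finset.sum_congr rfl (fun x _ => ?_), Finset.sum_const, smul_eq_mul]
    rw [Finset.card_image_of_injOn, card_range]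
    intro q hq r hr h
    exact ((enc_inj w (w_pos w) (mem_range.1 hq) (mem_range.1 hr)).1 h).2
  · intro x _ y _ hxy
    simp only [Function.onFun]
    rw [Finset.disjoint_left]
    intro e he1 he2
    obtain ⟨q, hq, rfl⟩ := mem_image.1 he1
    obtain ⟨r, hr, here⟩ := mem_image.1 he2
    exact hxy (((enc_inj w (w_pos w) (mem_range.1 hr) (mem_range.1 hq)).1 here).1).symm

lemma bigPts_mono {U0 V0 : Finset ℕ} (h : U0 ⊆ V0) : bigPts w U0 ⊆ bigPts w V0 := by
  intro e he
  obtain ⟨x, hx, q, hq, rfl⟩ := (mem_bigPts w).1 he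
  exact (mem_bigPts w).2 ⟨x, h hx, q, hq, rfl⟩

lemma bigB_mono {τ : ℕ → ℕ} {C : Finset (Finset ℕ)} {U0 V0 : Finset ℕ}
    {A0 B0 : Finset (Finset ℕ)} (hUV : U0 ⊆ V0) (hAB : A0 ⊆ B0) :
    bigB w τ C U0 A0 ⊆ bigB w τ C V0 B0 := by
  intro T hT
  rcases (mem_bigB w).1 hT with ⟨b, hb, a, d, rfl⟩ | ⟨x, hx, c, hc, rfl⟩
  · exact (mem_bigB w).2 (Or.inl ⟨b, hAB hb, a, d, rfl⟩)
  · exact (mem_bigB w).2 (Or.inr ⟨x, hUV hx, c, hc, rfl⟩)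

end K15

open K15 in
/-- If there exist an MK(2v+1), an RTD(3,w) and an STS(w) of chromatic index at
most (w-1)/2 + v, then there exists a KTS(2vw+w) containing an STS(vw). -/
theorem stmt15 (v w : ℕ) (hv : 0 < v) (hw : 0 < w) (hodd : Odd w)
    (h1 : ExistsKTSSubSTS (2 * v + 1) v) (h2 : ExistsRTD3 w)
    (h3 : ∃ (W : Finset ℕ) (C : Finset (Finset ℕ)),
      IsSTS W C ∧ W.card = w ∧ ChromIndexLE C ((w - 1) / 2 + v)) :
    ExistsKTSSubSTS (2 * v * w + w) (v * w) := by
  classical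
  haveI : NeZero w := ⟨hw.ne'⟩
  obtain ⟨V, U, B, A, ⟨hVB, Rk, hRk⟩, hUA, hUV, hAB, hVcard, hUcard⟩ := h1
  obtain ⟨W, C, hWC, hWw, R0, hR0card, hR0prop, hR0cov⟩ := h3
  set k := (w - 1) / 2 + v with hk
  -- the bijection τ : W → range w
  obtain ⟨τ, hτ1, hτi, hτs⟩ :
      ∃ τ : ℕ → ℕ, (∀ p ∈ W, τ p < w) ∧ (∀ p ∈ W, ∀ q ∈ W, τ p = τ q → p = q) ∧
        (∀ q, q < w → ∃ p ∈ W, τ p = q) := by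
    let e := W.orderIsoOfFin hWw
    refine ⟨fun p => if h : p ∈ W then ((e.symm ⟨p, h⟩ : Fin w) : ℕ) else 0, ?_, ?_, ?_⟩
    · intro p hp; simp only [dif_pos hp]; exact (e.symm ⟨p, hp⟩).is_lt
    · intro p hp q hq h
      simp only [dif_pos hp, dif_pos hq] at h
      have := e.symm.injective (Fin.val_injective h)
      exact congrArg Subtype.val this
    · intro q hq
      refine ⟨(e ⟨q, hq⟩ : ℕ), (e ⟨q, hq⟩).2, ?_⟩
      simp only [dif_pos (e ⟨q, hq⟩).2]
      have h2 : e.symm ⟨((e ⟨q, hq⟩ : W) : ℕ), (e ⟨q, hq⟩).2⟩ = ⟨q, hq⟩ := by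
        rw [Subtype.coe_eta]; exact e.symm_apply_apply _
      rw [h2]
  -- the colouring col : C → range k
  obtain ⟨col, hcol1, hcol2⟩ :
      ∃ col : Finset ℕ → ℕ, (∀ c ∈ C, col c < k) ∧
        (∀ c1 ∈ C, ∀ c2 ∈ C, col c1 = col c2 → c1 = c2 ∨ Disjoint c1 c2) := by
    have hgex : ∀ c, c ∈ C → ∃ P, P ∈ R0 ∧ c ∈ P := by
      intro c hc; obtain ⟨P, hP, h⟩ := hR0cov c hc; exact ⟨P, hP, h⟩
    choose g hg using hgex
    refine ⟨fun c => if hc : c ∈ C then R0.toList.idxOf (g c hc) else 0, ?_, ?_⟩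
    · intro c hc
      simp only [dif_pos hc]
      calc R0.toList.idxOf (g c hc) < R0.toList.length :=
            List.idxOf_lt_length_iff.2 (mem_toList.2 (hg c hc).1)
        _ = R0.card := Finset.length_toList R0
        _ ≤ k := hR0card
    · intro c1 h1 c2 h2 h
      simp only [dif_pos h1, dif_pos h2] at h
      have hgg : g c1 h1 = g c2 h2 := by
        have m1 := mem_toList.2 (hg c1 h1).1
        have m2 := mem_toList.2 (hg c2 h2).1
        exact (List.idxOf_inj m1).1 h
      by_cases hcc : c1 = c2
      · exact Or.inl hcc
      · exact Or.inr ((hR0prop _ (hg c1 h1).1).2 c1 (hg c1 h1).2 c2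
          (hgg ▸ (hg c2 h2).2) hcc)
  -- the class function cls : B → Rk
  obtain ⟨cls, hcls1⟩ :
      ∃ cls : Finset ℕ → Finset (Finset ℕ), ∀ b ∈ B, cls b ∈ Rk ∧ b ∈ cls b := by
    have hclex : ∀ b, b ∈ B → ∃ P, P ∈ Rk ∧ b ∈ P := by
      intro b hb; obtain ⟨P, hP, -⟩ := hRk.2 b hb; exact ⟨P, hP⟩
    choose f hf using hclex
    exact ⟨fun b => if hb : b ∈ B then f b hb else ∅, fun b hb => by
      simp only [dif_pos hb]; exact hf b hb⟩
  have hcls2 : ∀ b ∈ B, ∀ P ∈ Rk, b ∈ P → P = cls b := by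
    intro b hb P hP hbP
    obtain ⟨Q, -, hQu⟩ := hRk.2 b hb
    rw [hQu P ⟨hP, hbP⟩, ← hQu (cls b) ⟨(hcls1 b hb).1, (hcls1 b hb).2⟩]
  -- counting: Rk has exactly v classes
  have hVne : V.Nonempty := card_pos.1 (by rw [hVcard]; omega)
  obtain ⟨x0, hx0⟩ := hVne
  have hdeg := sts_degree hVB hx0
  rw [hVcard] at hdeg
  have hRkcard : Rk.card = v := by
    rw [res_count hRk hx0]; omega
  -- counting: each missing-colour set has exactly v elements
  have hD : ∀ q, q < w →
      ((range k).filter (fun i => ¬∃ c ∈ C, col c = i ∧ ∃ p ∈ c, τ p = q)).card = v := by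
    intro q hq
    obtain ⟨p0, hp0, hτ0⟩ := hτs q hq
    have hdegW := sts_degree hWC hp0
    rw [hWw] at hdegW
    have hDeq : (range k).filter (fun i => ¬∃ c ∈ C, col c = i ∧ ∃ p ∈ c, τ p = q)
        = (range k) \ ((C.filter (fun c => p0 ∈ c)).image col) := by
      ext i
      constructor
      · intro hi
        rw [mem_filter] at hi
        rw [mem_sdiff]
        refine ⟨hi.1, ?_⟩
        intro him
        obtain ⟨c, hc, hcol⟩ := mem_image.1 him
        rw [mem_filter] at hc
        exact hi.2 ⟨c, hc.1, hcol, p0, hc.2, hτ0⟩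
      · intro hi
        rw [mem_sdiff] at hi
        rw [mem_filter]
        refine ⟨hi.1, ?_⟩
        rintro ⟨c, hcC, hcoli, p, hpc, hτp⟩
        have hpW : p ∈ W := (hWC.1 c hcC).1 hpc
        have hpp0 : p = p0 := hτi p hpW p0 hp0 (by rw [hτp, hτ0])
        exact hi.2 (mem_image.2 ⟨c, mem_filter.2 ⟨hcC, hpp0 ▸ hpc⟩, hcoli⟩)
    rw [hDeq, card_sdiff_of_subset]
    · have himcard : ((C.filter (fun c => p0 ∈ c)).image col).card
          = (C.filter (fun c => p0 ∈ c)).card := by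
        apply Finset.card_image_of_injOn
        intro c1 h1 c2 h2 hcc
        simp only [coe_filter, Set.mem_setOf_eq] at h1 h2
        rcases hcol2 c1 h1.1 c2 h2.1 hcc with h | h
        · exact h
        · exact absurd h2.2 (Finset.disjoint_left.1 h h1.2)
      rw [card_range, himcard]
      omega
    · intro i hi
      obtain ⟨c, hc, rfl⟩ := mem_image.1 hi
      rw [mem_filter] at hc
      exact mem_range.2 (hcol1 c hc.1)
  -- the assignment σ
  obtain ⟨σ, hσ1, hσ2, hσ3⟩ :
      ∃ σ : ℕ → Finset (Finset ℕ) → ℕ,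
        (∀ q, q < w → ∀ P ∈ Rk, σ q P < k ∧
          ¬ ∃ c ∈ C, col c = σ q P ∧ ∃ p ∈ c, τ p = q) ∧
        (∀ q, q < w → ∀ P1 ∈ Rk, ∀ P2 ∈ Rk, σ q P1 = σ q P2 → P1 = P2) ∧
        (∀ q, q < w → ∀ i, i < k → (¬ ∃ c ∈ C, col c = i ∧ ∃ p ∈ c, τ p = q) →
          ∃ P ∈ Rk, σ q P = i) := by
    have hex : ∀ q, q < w → ∃ f : Finset (Finset ℕ) → ℕ,
        (∀ P ∈ Rk, f P ∈ (range k).filter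
            (fun i => ¬∃ c ∈ C, col c = i ∧ ∃ p ∈ c, τ p = q)) ∧
        (∀ P1 ∈ Rk, ∀ P2 ∈ Rk, f P1 = f P2 → P1 = P2) ∧
        (∀ i ∈ (range k).filter (fun i => ¬∃ c ∈ C, col c = i ∧ ∃ p ∈ c, τ p = q),
            ∃ P ∈ Rk, f P = i) := by
      intro q hq
      exact exists_map Rk _ (by rw [hRkcard, hD q hq])
    choose f hf using hex
    refine ⟨fun q P => if h : q < w then f q h P else 0, ?_, ?_, ?_⟩
    · intro q hq P hP
      simp only [dif_pos hq]
      have := (hf q hq).1 P hP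
      rw [mem_filter, mem_range] at this
      exact this
    · intro q hq P1 hP1 P2 hP2 h
      simp only [dif_pos hq] at h
      exact (hf q hq).2.1 P1 hP1 P2 hP2 h
    · intro q hq i hik hncov
      obtain ⟨P, hP, hfP⟩ := (hf q hq).2.2 i (mem_filter.2 ⟨mem_range.2 hik, hncov⟩)
      exact ⟨P, hP, by simp only [dif_pos hq]; exact hfP⟩
  -- assemble
  have hbigSTS := big_sts w hodd hWC hτ1 hτi hτs hVB
  have hbigSub := big_sts w hodd hWC hτ1 hτi hτs hUA
  have hbigRes := big_res w hodd hWC hτ1 hτi hcol1 hcol2 hVB hRk hcls1 hcls2 hσ1 hσ2 hσ3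
  refine ⟨bigPts w V, bigPts w U, bigB w τ C V B, bigB w τ C U A,
    ⟨hbigSTS, _, hbigRes⟩, hbigSub, bigPts_mono w hUV, bigB_mono w hUV hAB, ?_, ?_⟩
  · rw [bigPts_card w, hVcard]; ring
  · rw [bigPts_card w, hUcard]
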